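/- Let B be a Boolean algebra with underlying lattice B_L. Then B_L × B_L^op, equipped with (x,y)' = (x', y') and (x,y)‾ = (y,x), is a Boole-De Morgan algebra, and the map x ↦ (x, x̄) (with x̄ := x' in B) is an embedding of Boole-De Morgan algebras when B is given the De Morgan negation equal to its Boolean negation. -/

import Mathlib

/-- Let `B` be a Boolean algebra. Then `B_L × B_Lᵒᵈ` with `(x,y)' = (x', y')` and
`(x,y)‾ = (y,x)` is a Boole-De Morgan algebra (the map `c` is a complementation
on the product lattice and `dm` satisfies the De Morgan axioms), and `x ↦ (x, x')`
is an embedding of Boole-De Morgan algebras, where `B` carries the De Morgan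
negation equal to its Boolean negation. -/
theorem booleanAlgebra_prod_orderDual_booleDeMorgan {B : Type*} [BooleanAlgebra B] :
    let c : B × Bᵒᵈ → B × Bᵒᵈ :=
      fun p => ((p.1)ᶜ, OrderDual.toDual ((OrderDual.ofDual p.2)ᶜ))
    let dm : B × Bᵒᵈ → B × Bᵒᵈ := fun p => (OrderDual.ofDual p.2, OrderDual.toDual p.1)
    let i : B → B × Bᵒᵈ := fun x => (x, OrderDual.toDual xᶜ)
    (∀ p : B × Bᵒᵈ, p ⊓ c p = ⊥) ∧
      (∀ p : B × Bᵒᵈ, p ⊔ c p = ⊤) ∧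
      (∀ p : B × Bᵒᵈ, dm (dm p) = p) ∧
      (∀ p q : B × Bᵒᵈ, dm (p ⊔ q) = dm p ⊓ dm q) ∧
      Function.Injective i ∧
      (∀ x y : B, i (x ⊔ y) = i x ⊔ i y) ∧
      (∀ x y : B, i (x ⊓ y) = i x ⊓ i y) ∧
      i ⊥ = ⊥ ∧ i ⊤ = ⊤ ∧
      (∀ x : B, i (xᶜ) = c (i x)) ∧
      (∀ x : B, i (xᶜ) = dm (i x)) := by
  refine ⟨?_, ?_, ?_, ?_, ?_, ?_, ?_, ?_, ?_, ?_, ?_⟩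
  · intro p; exact Prod.ext (by simp [Prod.fst_inf]) (by simp [Prod.snd_inf])
  · intro p; exact Prod.ext (by simp [Prod.fst_sup]) (by simp [Prod.snd_sup])
  · intro p; rfl
  · intro p q; rfl
  · intro x y h; exact congrArg Prod.fst h
  · intro x y
    exact Prod.ext rfl (by change OrderDual.toDual _ = OrderDual.toDual _ ⊔ OrderDual.toDual _; simp)
  · intro x y
    exact Prod.ext rfl (by change OrderDual.toDual _ = OrderDual.toDual _ ⊓ OrderDual.toDual _; simp)
  · exact Prod.ext rfl (by simp)
  · exact Prod.ext rfl (by simp)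
  · intro x; exact Prod.ext rfl (by simp)
  · intro x; exact Prod.ext rfl (by simp)
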